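/- For all positive integers l, m, g, d one has τ_{l,m}^{g,d} = τ_{m,l}^{g,d}, where τ_{l,m}^{g,d} denotes the number of pairs (r, s) with r ∈ (ℤ/gℤ)^d, s a group homomorphism (ℤ/gℤ)^d → ℚ/ℤ, such that gcd(m,g)·r = 0, gcd(l,g)·s = 0, and s(r) = 0. -/

import Mathlib

/-- `τ_{l,m}^{g,d}`: the number of pairs `(r, s)` with `r ∈ (ℤ/gℤ)^d` and
`s : (ℤ/gℤ)^d →+ ℚ/ℤ` such that `gcd(m,g)·r = 0`, `gcd(l,g)·s = 0`, and `s r = 0`. -/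
noncomputable def tau (l m g d : ℕ) : ℕ :=
  Nat.card {p : (Fin d → ZMod g) × ((Fin d → ZMod g) →+ AddCircle (1 : ℚ)) //
    Nat.gcd m g • p.1 = 0 ∧ Nat.gcd l g • p.2 = 0 ∧ p.2 p.1 = 0}



section aux
variable {g : ℕ} [NeZero g]

noncomputable def toC : ZMod g →+ AddCircle (1 : ℚ) :=
  ZMod.lift g ⟨(QuotientAddGroup.mk' _).comp
      (AddMonoidHom.mk' (fun j : ℤ => (j / g : ℚ)) (by intro a b; push_cast; rw [add_div])),
    by
      simp only [AddMonoidHom.comp_apply, AddMonoidHom.mk'_apply, QuotientAddGroup.mk'_apply]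
      push_cast
      rw [div_self (by exact_mod_cast (NeZero.ne g))]
      exact (AddCircle.coe_period (1:ℚ))⟩

lemma toC_intCast (j : ℤ) : toC (j : ZMod g) = ((j / g : ℚ) : AddCircle (1:ℚ)) := by
  simp [toC]

lemma toC_apply (z : ZMod g) : toC z = (((z.val : ℚ) / g : ℚ) : AddCircle (1:ℚ)) := by
  have h := toC_intCast (g := g) (z.val : ℤ)
  have h2 : (((z.val : ℤ)) : ZMod g) = z := by
    push_cast
    simp [ZMod.natCast_val, ZMod.cast_id]
  rw [h2] at h
  rw [h]
  norm_num

lemma toC_eq_zero {z : ZMod g} : toC z = 0 ↔ z = 0 := by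
  have hg : (0:ℚ) < g := by exact_mod_cast (NeZero.pos g)
  constructor
  · intro h
    rw [toC_apply, AddCircle.coe_eq_zero_iff] at h
    obtain ⟨n, hn⟩ := h
    rw [zsmul_eq_mul, mul_one, eq_div_iff (ne_of_gt hg)] at hn
    have h1 : (z.val : ℚ) = n * g := hn.symm
    have h0 : (0:ℚ) ≤ (n:ℚ) * g := by rw [← h1]; positivity
    have h2 : (n:ℚ) * g < g := by
      rw [← h1]; exact_mod_cast (ZMod.val_lt z)
    have hn0 : n = 0 := by
      rcases lt_trichotomy n 0 with h | h | h
      · have : n ≤ -1 := by omega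
        have : (n:ℚ) ≤ -1 := by exact_mod_cast this
        nlinarith
      · exact h
      · have : (1:ℚ) ≤ n := by exact_mod_cast h
        nlinarith
    have hz : (z.val : ℚ) = 0 := by rw [hn0] at h1; push_cast at h1; linarith
    exact (ZMod.val_eq_zero z).mp (by exact_mod_cast hz)
  · rintro rfl; simp

lemma toC_injective : Function.Injective (toC : ZMod g → AddCircle (1:ℚ)) :=
  (injective_iff_map_eq_zero' _).mpr (fun _ => toC_eq_zero)

lemma toC_surj_torsion {y : AddCircle (1:ℚ)} (hy : g • y = 0) : ∃ z : ZMod g, toC z = y := by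
  have hg : (0:ℚ) < g := by exact_mod_cast (NeZero.pos g)
  obtain ⟨q, rfl⟩ := QuotientAddGroup.mk_surjective y
  have h : ((g • q : ℚ) : AddCircle (1:ℚ)) = 0 := by
    rw [← hy]; rfl
  rw [AddCircle.coe_eq_zero_iff] at h
  obtain ⟨n, hn⟩ := h
  refine ⟨(n : ZMod g), ?_⟩
  rw [toC_intCast]
  congr 1
  rw [zsmul_eq_mul, mul_one, nsmul_eq_mul] at hn
  rw [div_eq_iff (ne_of_gt hg)]
  linarith

end aux

section phi
variable {g d : ℕ} [NeZero g]

/-- The duality map from vectors to characters. -/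
noncomputable def Phi (t : Fin d → ZMod g) : (Fin d → ZMod g) →+ AddCircle (1:ℚ) :=
  AddMonoidHom.mk' (fun x => toC (∑ i, t i * x i)) (by
    intro a b
    rw [← map_add, ← Finset.sum_add_distrib]
    simp [mul_add])

lemma Phi_apply (t x : Fin d → ZMod g) : Phi t x = toC (∑ i, t i * x i) := rfl

lemma Phi_single_one (t : Fin d → ZMod g) (i : Fin d) :
    Phi t (Pi.single i 1) = toC (t i) := by
  rw [Phi_apply]
  congr 1
  simp [Pi.single_apply, mul_ite]

lemma Phi_injective : Function.Injective (Phi : (Fin d → ZMod g) → _) := by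
  intro t t' h
  funext i
  apply toC_injective
  rw [← Phi_single_one t i, ← Phi_single_one t' i, h]

lemma g_smul_eq_zero (v : Fin d → ZMod g) : g • v = 0 := by
  funext i
  simp [nsmul_eq_mul, ZMod.natCast_self]

lemma Phi_surjective : Function.Surjective (Phi : (Fin d → ZMod g) → _) := by
  intro s
  have htor : ∀ i : Fin d, g • s (Pi.single i 1) = 0 := by
    intro i
    rw [← map_nsmul, g_smul_eq_zero, map_zero]
  choose t ht using fun i => toC_surj_torsion (htor i)
  refine ⟨t, ?_⟩
  ext i c
  simp only [AddMonoidHom.comp_apply, AddMonoidHom.single_apply]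
  have hsingle : Pi.single i c = (c.val • Pi.single i 1 : Fin d → ZMod g) := by
    funext j
    rcases eq_or_ne j i with rfl | hj
    · simp [ZMod.natCast_val, ZMod.cast_id]
    · simp [Pi.single_apply, hj]
  rw [hsingle, map_nsmul, map_nsmul, Phi_single_one, ht]

lemma smul_Phi (n : ℕ) (t : Fin d → ZMod g) : n • Phi t = Phi (n • t) := by
  refine AddMonoidHom.ext fun x => ?_
  show n • toC (∑ i, t i * x i) = toC (∑ i, (n • t) i * x i)
  rw [← map_nsmul, Finset.smul_sum]
  refine congrArg _ (Finset.sum_congr rfl fun i _ => ?_)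
  simp [smul_mul_assoc, mul_assoc]

end phi

section main
variable {g d : ℕ} [NeZero g]

lemma Phi_zero : (Phi 0 : (Fin d → ZMod g) →+ AddCircle (1:ℚ)) = 0 := by
  refine AddMonoidHom.ext fun x => ?_
  rw [Phi_apply]
  simp

lemma smul_Phi_eq_zero (n : ℕ) (t : Fin d → ZMod g) : n • Phi t = 0 ↔ n • t = 0 := by
  rw [smul_Phi, ← Phi_zero, Phi_injective.eq_iff]

lemma Phi_apply_eq_zero (t r : Fin d → ZMod g) : Phi t r = 0 ↔ ∑ i, t i * r i = 0 := by
  rw [Phi_apply, toC_eq_zero]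

noncomputable def PhiEquiv : (Fin d → ZMod g) ≃ ((Fin d → ZMod g) →+ AddCircle (1:ℚ)) :=
  Equiv.ofBijective Phi ⟨Phi_injective, Phi_surjective⟩

noncomputable def swapMap (a b : ℕ) :
    {p : (Fin d → ZMod g) × ((Fin d → ZMod g) →+ AddCircle (1 : ℚ)) //
      a • p.1 = 0 ∧ b • p.2 = 0 ∧ p.2 p.1 = 0} →
    {p : (Fin d → ZMod g) × ((Fin d → ZMod g) →+ AddCircle (1 : ℚ)) //
      b • p.1 = 0 ∧ a • p.2 = 0 ∧ p.2 p.1 = 0} := fun p =>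
  ⟨(PhiEquiv.symm p.1.2, Phi p.1.1), by
    obtain ⟨h1, h2, h3⟩ := p.2
    have hs : Phi (PhiEquiv.symm p.1.2) = p.1.2 := PhiEquiv.apply_symm_apply _
    refine ⟨?_, ?_, ?_⟩
    · rw [← smul_Phi_eq_zero, hs]; exact h2
    · rw [smul_Phi_eq_zero]; exact h1
    · rw [Phi_apply_eq_zero]
      have h4 : Phi (PhiEquiv.symm p.1.2) p.1.1 = 0 := by rw [hs]; exact h3
      rw [Phi_apply_eq_zero] at h4
      rw [← h4]
      exact Finset.sum_congr rfl fun i _ => mul_comm _ _⟩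

noncomputable def swapEquiv (a b : ℕ) :
    {p : (Fin d → ZMod g) × ((Fin d → ZMod g) →+ AddCircle (1 : ℚ)) //
      a • p.1 = 0 ∧ b • p.2 = 0 ∧ p.2 p.1 = 0} ≃
    {p : (Fin d → ZMod g) × ((Fin d → ZMod g) →+ AddCircle (1 : ℚ)) //
      b • p.1 = 0 ∧ a • p.2 = 0 ∧ p.2 p.1 = 0} where
  toFun := swapMap a b
  invFun := swapMap b a
  left_inv p := Subtype.ext (Prod.ext (PhiEquiv.symm_apply_apply _) (PhiEquiv.apply_symm_apply _))
  right_inv p := Subtype.ext (Prod.ext (PhiEquiv.symm_apply_apply _) (PhiEquiv.apply_symm_apply _))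

end main

/-- For all positive integers `l, m, g, d` one has
`τ_{l,m}^{g,d} = τ_{m,l}^{g,d}`. -/
theorem stmt_13 (l m g d : ℕ) (hl : 0 < l) (hm : 0 < m) (hg : 0 < g) (hd : 0 < d) :
    tau l m g d = tau m l g d := by
  have : NeZero g := ⟨hg.ne'⟩
  exact Nat.card_congr (swapEquiv (Nat.gcd m g) (Nat.gcd l g))
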